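/- Let S be a nonempty set, A a nonempty set, d ≥ 1, and φ : S × A → ℝ^d a map with ‖φ(s,a)‖₂ ≤ 1 for all (s,a). Fix constants M > 0, L > 0, B > 0, D > 0, λ > 0 and ε > 0. Let 𝒬 be the class of all functions Q : S × A → ℝ of the form Q(s,a) = min( wᵀφ(s,a) + v + β·√(φ(s,a)ᵀ Λ⁻¹ φ(s,a)), M ) where the parameters range over all w ∈ ℝ^d with ‖w‖₂ ≤ L, all β ∈ [0, B], all v ∈ [0, D], and all symmetric positive definite d×d matrices Λ whose minimum eigenvalue is at least λ. Then there exists a finite set C of functions from S × A to ℝ such that: every Q ∈ 𝒬 has some Q' ∈ C with sup_{(s,a)} |Q(s,a) − Q'(s,a)| ≤ ε, and log|C| ≤ d·log(1 + 8L/ε) + log(1 + 8D/ε) + d²·log(1 + 8√d·B²/(λε²)). -/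

import Mathlib

open Matrix Finset Metric MeasureTheory
open scoped ENNReal NNReal

lemma abs_sqrt_sub_sqrt (a b : ℝ) : |Real.sqrt a - Real.sqrt b| ≤ Real.sqrt |a - b| := by
  wlog h : b ≤ a generalizing a b
  · rw [abs_sub_comm, abs_sub_comm a b]; exact this b a (le_of_not_ge h)
  rw [abs_of_nonneg (sub_nonneg.2 (Real.sqrt_le_sqrt h)), abs_of_nonneg (sub_nonneg.2 h)]
  rcases le_or_gt b 0 with hb | hb
  · have h1 : Real.sqrt a ≤ Real.sqrt (a - b) := Real.sqrt_le_sqrt (by linarith)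
    have h2 : 0 ≤ Real.sqrt b := Real.sqrt_nonneg b
    linarith
  · have ha : 0 ≤ a := le_of_lt (lt_of_lt_of_le hb h)
    have hab : 0 ≤ a - b := by linarith
    have key : Real.sqrt a ≤ Real.sqrt (a - b) + Real.sqrt b := by
      have h1 := Real.sq_sqrt hab
      have h2 := Real.sq_sqrt hb.le
      have h3 := Real.sqrt_nonneg (a - b)
      have h4 := Real.sqrt_nonneg b
      have hsq : a ≤ (Real.sqrt (a - b) + Real.sqrt b) ^ 2 := by nlinarith [mul_nonneg h3 h4]
      calc Real.sqrt a ≤ Real.sqrt ((Real.sqrt (a - b) + Real.sqrt b) ^ 2) := Real.sqrt_le_sqrt hsq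
        _ = Real.sqrt (a - b) + Real.sqrt b := Real.sqrt_sq (by positivity)
    linarith

lemma min_lip (a b c : ℝ) : |min a c - min b c| ≤ |a - b| := by
  rcases le_total a c with h1 | h1 <;> rcases le_total b c with h2 | h2 <;>
    simp only [min_eq_left h1, min_eq_right h1, min_eq_left h2, min_eq_right h2] <;>
    rcases abs_cases (a - b) with ⟨h3, h4⟩ | ⟨h3, h4⟩ <;>
    rw [abs_le] <;> constructor <;> simp <;> linarith

lemma abs_sum_mul_le {ι : Type*} [Fintype ι] (f g : ι → ℝ) :
    |∑ i, f i * g i| ≤ Real.sqrt (∑ i, f i ^ 2) * Real.sqrt (∑ i, g i ^ 2) := by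
  rw [abs_le]
  constructor
  · have := Real.sum_mul_le_sqrt_mul_sqrt Finset.univ (fun i => -f i) g
    simp only [neg_mul, Finset.sum_neg_distrib, neg_sq] at this
    linarith
  · exact Real.sum_mul_le_sqrt_mul_sqrt _ _ _

lemma cover_ball_card {E : Type*} [NormedAddCommGroup E] [NormedSpace ℝ E]
    [MeasurableSpace E] [BorelSpace E] [FiniteDimensional ℝ E]
    (μ : Measure E) [μ.IsAddHaarMeasure] {R r : ℝ} (hR : 0 ≤ R) (hr : 0 < r) :
    ∃ P : Finset E, P.Nonempty ∧ (∀ x ∈ closedBall (0 : E) R, ∃ p ∈ P, dist x p ≤ r) ∧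
      (P.card : ℝ) ≤ (1 + 2 * R / r) ^ (Module.finrank ℝ E) := by
  classical
  set n := Module.finrank ℝ E with hn
  have v1pos : 0 < μ (ball (0 : E) 1) := measure_ball_pos μ _ one_pos
  have v1top : μ (ball (0 : E) 1) ≠ ⊤ := measure_ball_lt_top.ne
  have key : ∀ P : Finset E, (↑P ⊆ closedBall (0 : E) R) →
      (∀ p ∈ P, ∀ q ∈ P, p ≠ q → r ≤ dist p q) → (P.card : ℝ) ≤ (1 + 2 * R / r) ^ n := by
    intro P hPB hsep
    have hdisj : (P : Set E).PairwiseDisjoint (fun p => ball p (r / 2)) := by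
      intro p hp q hq hpq
      exact ball_disjoint_ball (by linarith [hsep p hp q hq hpq])
    have hmeas : ∀ p ∈ P, MeasurableSet (ball p (r / 2)) := fun p _ => measurableSet_ball
    have hsub : (⋃ p ∈ P, ball p (r / 2)) ⊆ ball (0 : E) (R + r / 2) := by
      intro x hx
      simp only [Set.mem_iUnion] at hx
      obtain ⟨p, hp, hxp⟩ := hx
      have h1 : dist p 0 ≤ R := mem_closedBall.1 (hPB hp)
      have h2 : dist x p < r / 2 := mem_ball.1 hxp
      exact mem_ball.2 (by calc dist x 0 ≤ dist x p + dist p 0 := dist_triangle _ _ _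
        _ < R + r / 2 := by linarith)
    have hle : (P.card : ℝ≥0∞) * μ (ball (0 : E) (r / 2)) ≤ μ (ball (0 : E) (R + r / 2)) := by
      calc (P.card : ℝ≥0∞) * μ (ball (0 : E) (r / 2))
          = ∑ p ∈ P, μ (ball p (r / 2)) := by
            simp [Measure.addHaar_ball_center, Finset.sum_const, nsmul_eq_mul]
        _ = μ (⋃ p ∈ P, ball p (r / 2)) := (measure_biUnion_finset hdisj hmeas).symm
        _ ≤ _ := measure_mono hsub
    rw [Measure.addHaar_ball_of_pos μ _ (by linarith : (0:ℝ) < r / 2),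
      Measure.addHaar_ball_of_pos μ _ (by linarith : (0:ℝ) < R + r / 2), ← mul_assoc] at hle
    have hle2 := (ENNReal.mul_le_mul_iff_left v1pos.ne' v1top).1 hle
    rw [← ENNReal.ofReal_natCast, ← ENNReal.ofReal_mul (by positivity)] at hle2
    have hle3 : (P.card : ℝ) * (r / 2) ^ n ≤ (R + r / 2) ^ n :=
      (ENNReal.ofReal_le_ofReal_iff (by positivity)).1 hle2
    have hrw : (1 + 2 * R / r) = (R + r / 2) / (r / 2) := by field_simp; ring
    rw [hrw, div_pow, le_div_iff₀ (by positivity)]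
    exact hle3
  set T : Set ℕ := {k | ∃ P : Finset E, (↑P ⊆ closedBall (0 : E) R) ∧
    (∀ p ∈ P, ∀ q ∈ P, p ≠ q → r ≤ dist p q) ∧ P.card = k} with hT
  have hT1 : 1 ∈ T := by
    refine ⟨{0}, ?_, ?_, by simp⟩
    · simp only [Finset.coe_singleton, Set.singleton_subset_iff, mem_closedBall, dist_self]
      exact hR
    · intro p hp q hq hpq
      simp only [Finset.mem_singleton] at hp hq
      exact absurd (hp.trans hq.symm) hpq
  have hTbdd : BddAbove T := by
    refine ⟨Nat.ceil ((1 + 2 * R / r) ^ n), ?_⟩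
    rintro k ⟨P, h1, h2, rfl⟩
    exact_mod_cast Nat.cast_le.1 ((key P h1 h2).trans (Nat.le_ceil _))
  obtain ⟨P, hPB, hsep, hPcard⟩ := Nat.sSup_mem ⟨1, hT1⟩ hTbdd
  refine ⟨P, ?_, ?_, hPcard ▸ key P hPB hsep⟩
  · rw [← Finset.card_pos, hPcard]
    exact lt_of_lt_of_le Nat.one_pos (le_csSup hTbdd hT1)
  · intro x hx
    by_contra hcon
    push_neg at hcon
    have hxP : x ∉ P := fun hxP => by have := hcon x hxP; rw [dist_self] at this; linarith
    have hmem : (P.card + 1) ∈ T := by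
      refine ⟨insert x P, ?_, ?_, by rw [Finset.card_insert_of_notMem hxP]⟩
      · rw [Finset.coe_insert, Set.insert_subset_iff]
        exact ⟨hx, hPB⟩
      · intro p hp q hq hpq
        rcases Finset.mem_insert.1 hp with rfl | hp' <;> rcases Finset.mem_insert.1 hq with rfl | hq'
        · exact absurd rfl hpq
        · exact (hcon q hq').le
        · rw [dist_comm]; exact (hcon p hp').le
        · exact hsep p hp' q hq' hpq
    have := le_csSup hTbdd hmem
    omega

theorem stmt_8 {S A : Type*} [Nonempty S] [Nonempty A] (d : ℕ) (hd : 1 ≤ d)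
    (φ : S → A → Fin d → ℝ) (hφ : ∀ s a, Real.sqrt (∑ j, φ s a j ^ 2) ≤ 1)
    (M L B D lam ε : ℝ) (hM : 0 < M) (hL : 0 < L) (hB : 0 < B) (hD : 0 < D)
    (hlam : 0 < lam) (hε : 0 < ε) :
    ∃ C : Finset (S → A → ℝ),
      (∀ Q : S → A → ℝ,
        (∃ (w : Fin d → ℝ) (β v : ℝ) (Λ : Matrix (Fin d) (Fin d) ℝ),
          Real.sqrt (∑ j, w j ^ 2) ≤ L ∧ β ∈ Set.Icc 0 B ∧ v ∈ Set.Icc 0 D ∧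
          Λ.IsSymm ∧ (∀ x : Fin d → ℝ, lam * (x ⬝ᵥ x) ≤ x ⬝ᵥ (Λ *ᵥ x)) ∧
          ∀ s a, Q s a =
            min (w ⬝ᵥ φ s a + v + β * Real.sqrt (φ s a ⬝ᵥ (Λ⁻¹ *ᵥ φ s a))) M) →
        ∃ Q' ∈ C, ∀ s a, |Q s a - Q' s a| ≤ ε) ∧
      Real.log C.card ≤ d * Real.log (1 + 8 * L / ε) + Real.log (1 + 8 * D / ε) +
        d ^ 2 * Real.log (1 + 8 * Real.sqrt d * B ^ 2 / (lam * ε ^ 2)) := by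
  classical
  obtain ⟨Pw, hPwne, hPwcov, hPwcard⟩ :=
    cover_ball_card (E := EuclideanSpace ℝ (Fin d)) volume hL.le
      (show (0:ℝ) < ε / 4 by linarith)
  obtain ⟨Pv, hPvne, hPvcov, hPvcard⟩ :=
    cover_ball_card (E := ℝ) volume hD.le (show (0:ℝ) < ε / 4 by linarith)
  obtain ⟨PA, hPAne, hPAcov, hPAcard⟩ :=
    cover_ball_card (E := EuclideanSpace ℝ (Fin d × Fin d)) volume
      (show (0:ℝ) ≤ Real.sqrt d * B ^ 2 / lam by positivity)
      (show (0:ℝ) < ε ^ 2 / 4 by positivity)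
  set g : EuclideanSpace ℝ (Fin d) × ℝ × EuclideanSpace ℝ (Fin d × Fin d) → S → A → ℝ :=
    fun t s a => min ((∑ j, t.1 j * φ s a j) + t.2.1 +
      Real.sqrt (∑ p : Fin d × Fin d, t.2.2 p * (φ s a p.1 * φ s a p.2))) M with hg
  refine ⟨(Pw ×ˢ Pv ×ˢ PA).image g, ?_, ?_⟩
  · rintro Q ⟨w, β, v, Λ, hw, hβ, hv, hsymm, hq, hQ⟩
    have hdotself : ∀ x : Fin d → ℝ, (0:ℝ) ≤ x ⬝ᵥ x :=
      fun x => Finset.sum_nonneg fun i _ => mul_self_nonneg _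
    have hpd : Λ.PosDef := by
      rw [Matrix.posDef_iff_dotProduct_mulVec]
      constructor
      · rw [Matrix.IsHermitian, Matrix.conjTranspose_eq_transpose_of_trivial]
        exact hsymm
      · intro x hx
        have h1 : 0 < x ⬝ᵥ x := by
          obtain ⟨i, hi⟩ := Function.ne_iff.1 hx
          exact Finset.sum_pos' (fun j _ => mul_self_nonneg _)
            ⟨i, Finset.mem_univ i, mul_self_pos.2 hi⟩
        have h2 : (0:ℝ) < lam * (x ⬝ᵥ x) := mul_pos hlam h1
        simpa using h2.trans_le (hq x)
    have hdet : IsUnit Λ.det := hpd.det_pos.ne'.isUnit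
    have hinv : ∀ x : Fin d → ℝ, Λ *ᵥ (Λ⁻¹ *ᵥ x) = x := by
      intro x
      rw [Matrix.mulVec_mulVec, Matrix.mul_nonsing_inv Λ hdet, Matrix.one_mulVec]
    have hquad : ∀ x : Fin d → ℝ, x ⬝ᵥ (Λ⁻¹ *ᵥ x) = (Λ⁻¹ *ᵥ x) ⬝ᵥ (Λ *ᵥ (Λ⁻¹ *ᵥ x)) := by
      intro x
      calc x ⬝ᵥ (Λ⁻¹ *ᵥ x) = (Λ⁻¹ *ᵥ x) ⬝ᵥ x := dotProduct_comm _ _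
        _ = (Λ⁻¹ *ᵥ x) ⬝ᵥ (Λ *ᵥ (Λ⁻¹ *ᵥ x)) := by rw [hinv]
    have hqnonneg : ∀ x : Fin d → ℝ, 0 ≤ x ⬝ᵥ (Λ⁻¹ *ᵥ x) := by
      intro x
      rw [hquad]
      have h1 := hq (Λ⁻¹ *ᵥ x)
      nlinarith [hdotself (Λ⁻¹ *ᵥ x)]
    have hcol : ∀ x : Fin d → ℝ, (Λ⁻¹ *ᵥ x) ⬝ᵥ (Λ⁻¹ *ᵥ x) ≤ (x ⬝ᵥ x) / lam ^ 2 := by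
      intro x
      set y := Λ⁻¹ *ᵥ x with hy
      have h1 : lam * (y ⬝ᵥ y) ≤ y ⬝ᵥ x := by
        have h := hq y
        rwa [show Λ *ᵥ y = x from hinv x] at h
      have h2 : (y ⬝ᵥ x) ^ 2 ≤ (y ⬝ᵥ y) * (x ⬝ᵥ x) := by
        have := Finset.sum_mul_sq_le_sq_mul_sq Finset.univ y x
        simpa [dotProduct, pow_two] using this
      rcases eq_or_lt_of_le (hdotself y) with h0 | h0
      · rw [← h0]
        exact div_nonneg (hdotself x) (by positivity)
      · rw [le_div_iff₀ (by positivity : (0:ℝ) < lam ^ 2)]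
        nlinarith [mul_self_le_mul_self (by positivity : (0:ℝ) ≤ lam * (y ⬝ᵥ y)) h1,
          hdotself x]
    have hcolsum : ∀ j : Fin d, (∑ i, (Λ⁻¹ i j) ^ 2) ≤ 1 / lam ^ 2 := by
      intro j
      have h := hcol (Pi.single j 1)
      rw [Matrix.mulVec_single_one] at h
      have hs : (Pi.single j 1 : Fin d → ℝ) ⬝ᵥ Pi.single j 1 = 1 := by
        simp [dotProduct, Pi.single_apply]
      rw [hs] at h
      simpa [dotProduct, Matrix.transpose_apply, pow_two] using h
    set vecA : EuclideanSpace ℝ (Fin d × Fin d) :=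
      (WithLp.toLp 2 (fun p : Fin d × Fin d => β ^ 2 * Λ⁻¹ p.1 p.2) : EuclideanSpace ℝ (Fin d × Fin d)) with hvecA
    have hvecA_mem : vecA ∈ closedBall (0 : EuclideanSpace ℝ (Fin d × Fin d))
        (Real.sqrt d * B ^ 2 / lam) := by
      rw [mem_closedBall_zero_iff]
      have hnorm : ‖vecA‖ = Real.sqrt (∑ p : Fin d × Fin d, (β ^ 2 * Λ⁻¹ p.1 p.2) ^ 2) := by
        rw [EuclideanSpace.norm_eq]
        congr 1
        apply Finset.sum_congr rfl
        intro p _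
        simp [hvecA, Real.norm_eq_abs, mul_pow, sq_abs]
      rw [hnorm]
      have e1 : ∑ p : Fin d × Fin d, (β ^ 2 * Λ⁻¹ p.1 p.2) ^ 2
          = β ^ 4 * ∑ p : Fin d × Fin d, (Λ⁻¹ p.1 p.2) ^ 2 := by
        rw [Finset.mul_sum]
        apply Finset.sum_congr rfl
        intros; ring
      have e2 : ∑ p : Fin d × Fin d, (Λ⁻¹ p.1 p.2) ^ 2 ≤ (d : ℝ) / lam ^ 2 := by
        rw [Fintype.sum_prod_type, Finset.sum_comm]
        calc ∑ j : Fin d, ∑ i : Fin d, (Λ⁻¹ i j) ^ 2 ≤ ∑ _j : Fin d, 1 / lam ^ 2 :=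
              Finset.sum_le_sum fun j _ => hcolsum j
          _ = (d : ℝ) / lam ^ 2 := by
              rw [Finset.sum_const, Finset.card_univ, Fintype.card_fin, nsmul_eq_mul, mul_one_div]
      have e3 : β ^ 4 ≤ B ^ 4 := by
        have := pow_le_pow_left₀ hβ.1 hβ.2 4
        simpa using this
      have e4 : ∑ p : Fin d × Fin d, (β ^ 2 * Λ⁻¹ p.1 p.2) ^ 2 ≤ B ^ 4 * ((d : ℝ) / lam ^ 2) := by
        rw [e1]
        have hd2 : 0 ≤ ∑ p : Fin d × Fin d, (Λ⁻¹ p.1 p.2) ^ 2 :=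
          Finset.sum_nonneg fun p _ => sq_nonneg _
        calc β ^ 4 * ∑ p : Fin d × Fin d, (Λ⁻¹ p.1 p.2) ^ 2
            ≤ B ^ 4 * ∑ p : Fin d × Fin d, (Λ⁻¹ p.1 p.2) ^ 2 := by
              apply mul_le_mul_of_nonneg_right e3 hd2
          _ ≤ B ^ 4 * ((d : ℝ) / lam ^ 2) := by
              apply mul_le_mul_of_nonneg_left e2 (by positivity)
      calc Real.sqrt (∑ p : Fin d × Fin d, (β ^ 2 * Λ⁻¹ p.1 p.2) ^ 2)
          ≤ Real.sqrt (B ^ 4 * ((d : ℝ) / lam ^ 2)) := Real.sqrt_le_sqrt e4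
        _ = Real.sqrt d * B ^ 2 / lam := by
            rw [show B ^ 4 * ((d : ℝ) / lam ^ 2) = (Real.sqrt d * B ^ 2 / lam) ^ 2 by
              rw [div_pow, mul_pow, Real.sq_sqrt (Nat.cast_nonneg d)]; ring]
            exact Real.sqrt_sq (by positivity)
    have hww : (WithLp.toLp 2 w : EuclideanSpace ℝ (Fin d)) ∈
        closedBall (0 : EuclideanSpace ℝ (Fin d)) L := by
      rw [mem_closedBall_zero_iff, EuclideanSpace.norm_eq]
      simpa [Real.norm_eq_abs, sq_abs] using hw
    obtain ⟨wc, hwcP, hwc⟩ := hPwcov (WithLp.toLp 2 w : EuclideanSpace ℝ (Fin d)) hww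
    obtain ⟨vc, hvcP, hvc⟩ := hPvcov v (by
      rw [mem_closedBall, Real.dist_eq, sub_zero, abs_of_nonneg hv.1]; exact hv.2)
    obtain ⟨Ac, hAcP, hAc⟩ := hPAcov vecA hvecA_mem
    refine ⟨g (wc, vc, Ac), Finset.mem_image_of_mem g
      (Finset.mem_product.2 ⟨hwcP, Finset.mem_product.2 ⟨hvcP, hAcP⟩⟩), ?_⟩
    intro s a
    rw [hQ s a]
    have hgx : g (wc, vc, Ac) s a = min ((∑ j, wc j * φ s a j) + vc +
        Real.sqrt (∑ p : Fin d × Fin d, Ac p * (φ s a p.1 * φ s a p.2))) M := rfl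
    rw [hgx]
    set x : Fin d → ℝ := φ s a with hx
    have hx0 : 0 ≤ ∑ j, x j ^ 2 := Finset.sum_nonneg fun j _ => sq_nonneg _
    have hx2 : ∑ j, x j ^ 2 ≤ 1 := by
      nlinarith [hφ s a, Real.sqrt_nonneg (∑ j, x j ^ 2), Real.sq_sqrt hx0]
    have t1 : |w ⬝ᵥ x - ∑ j, wc j * x j| ≤ ε / 4 := by
      have hrw : w ⬝ᵥ x - ∑ j, wc j * x j = ∑ j, (w j - wc j) * x j := by
        rw [dotProduct, ← Finset.sum_sub_distrib]
        apply Finset.sum_congr rfl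
        intros; ring
      rw [hrw]
      have hcs := abs_sum_mul_le (fun j => w j - wc j) x
      have hdd : Real.sqrt (∑ j, (w j - wc j) ^ 2)
          = dist (WithLp.toLp 2 w : EuclideanSpace ℝ (Fin d)) wc := by
        rw [EuclideanSpace.dist_eq]
        congr 1
        apply Finset.sum_congr rfl
        intro j _
        rw [Real.dist_eq, sq_abs]
      have hx1 : Real.sqrt (∑ j, x j ^ 2) ≤ 1 := hφ s a
      calc |∑ j, (w j - wc j) * x j|
          ≤ Real.sqrt (∑ j, (w j - wc j) ^ 2) * Real.sqrt (∑ j, x j ^ 2) := hcs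
        _ ≤ (ε / 4) * 1 := mul_le_mul (hdd ▸ hwc) hx1 (Real.sqrt_nonneg _) (by linarith)
        _ = ε / 4 := mul_one _
    have t2 : |v - vc| ≤ ε / 4 := by rw [← Real.dist_eq]; exact hvc
    have hbsqrt : β * Real.sqrt (x ⬝ᵥ (Λ⁻¹ *ᵥ x))
        = Real.sqrt (β ^ 2 * (x ⬝ᵥ (Λ⁻¹ *ᵥ x))) := by
      rw [Real.sqrt_mul (sq_nonneg β), Real.sqrt_sq hβ.1]
    have hexp : β ^ 2 * (x ⬝ᵥ (Λ⁻¹ *ᵥ x))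
        = ∑ p : Fin d × Fin d, vecA p * (x p.1 * x p.2) := by
      simp only [dotProduct, Matrix.mulVec, hvecA, PiLp.toLp_apply]
      rw [Fintype.sum_prod_type, Finset.mul_sum]
      apply Finset.sum_congr rfl
      intro i _
      rw [Finset.mul_sum, Finset.mul_sum]
      apply Finset.sum_congr rfl
      intro j _
      ring
    have hsumg : ∑ p : Fin d × Fin d, (x p.1 * x p.2) ^ 2 = (∑ j, x j ^ 2) ^ 2 := by
      rw [pow_two (∑ j, x j ^ 2), Finset.sum_mul_sum, Fintype.sum_prod_type]
      apply Finset.sum_congr rfl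
      intro i _
      apply Finset.sum_congr rfl
      intro j _
      ring
    have t3 : |β * Real.sqrt (x ⬝ᵥ (Λ⁻¹ *ᵥ x)) -
        Real.sqrt (∑ p : Fin d × Fin d, Ac p * (x p.1 * x p.2))| ≤ ε / 2 := by
      rw [hbsqrt]
      refine le_trans (abs_sqrt_sub_sqrt _ _) ?_
      have hdiff : β ^ 2 * (x ⬝ᵥ (Λ⁻¹ *ᵥ x)) - ∑ p : Fin d × Fin d, Ac p * (x p.1 * x p.2)
          = ∑ p : Fin d × Fin d, (vecA p - Ac p) * (x p.1 * x p.2) := by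
        rw [hexp, ← Finset.sum_sub_distrib]
        apply Finset.sum_congr rfl
        intros; ring
      rw [hdiff]
      have hcs := abs_sum_mul_le (fun p => vecA p - Ac p) (fun p : Fin d × Fin d => x p.1 * x p.2)
      have hdA : Real.sqrt (∑ p : Fin d × Fin d, (vecA p - Ac p) ^ 2) = dist vecA Ac := by
        rw [EuclideanSpace.dist_eq]
        congr 1
        apply Finset.sum_congr rfl
        intro p _
        rw [Real.dist_eq, sq_abs]
      have h2 : Real.sqrt (∑ p : Fin d × Fin d, (x p.1 * x p.2) ^ 2) ≤ 1 := by
        rw [hsumg, Real.sqrt_sq hx0]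
        exact hx2
      have hb : |∑ p : Fin d × Fin d, (vecA p - Ac p) * (x p.1 * x p.2)| ≤ ε ^ 2 / 4 := by
        calc |∑ p : Fin d × Fin d, (vecA p - Ac p) * (x p.1 * x p.2)|
            ≤ Real.sqrt (∑ p : Fin d × Fin d, (vecA p - Ac p) ^ 2) *
              Real.sqrt (∑ p : Fin d × Fin d, (x p.1 * x p.2) ^ 2) := hcs
          _ ≤ (ε ^ 2 / 4) * 1 := mul_le_mul (hdA ▸ hAc) h2 (Real.sqrt_nonneg _) (by positivity)
          _ = ε ^ 2 / 4 := mul_one _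
      calc Real.sqrt |∑ p : Fin d × Fin d, (vecA p - Ac p) * (x p.1 * x p.2)|
          ≤ Real.sqrt (ε ^ 2 / 4) := Real.sqrt_le_sqrt hb
        _ = ε / 2 := by
            rw [show ε ^ 2 / 4 = (ε / 2) ^ 2 by ring, Real.sqrt_sq (by positivity)]
    calc |min (w ⬝ᵥ x + v + β * Real.sqrt (x ⬝ᵥ (Λ⁻¹ *ᵥ x))) M -
        min ((∑ j, wc j * x j) + vc +
          Real.sqrt (∑ p : Fin d × Fin d, Ac p * (x p.1 * x p.2))) M|
        ≤ |(w ⬝ᵥ x + v + β * Real.sqrt (x ⬝ᵥ (Λ⁻¹ *ᵥ x))) -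
          ((∑ j, wc j * x j) + vc +
            Real.sqrt (∑ p : Fin d × Fin d, Ac p * (x p.1 * x p.2)))| := min_lip _ _ _
      _ ≤ ε := by
          have hre : (w ⬝ᵥ x + v + β * Real.sqrt (x ⬝ᵥ (Λ⁻¹ *ᵥ x))) -
              ((∑ j, wc j * x j) + vc +
                Real.sqrt (∑ p : Fin d × Fin d, Ac p * (x p.1 * x p.2)))
              = (w ⬝ᵥ x - ∑ j, wc j * x j) + (v - vc) +
                (β * Real.sqrt (x ⬝ᵥ (Λ⁻¹ *ᵥ x)) -
                  Real.sqrt (∑ p : Fin d × Fin d, Ac p * (x p.1 * x p.2))) := by ring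
          rw [hre]
          have ha1 := abs_add_le ((w ⬝ᵥ x - ∑ j, wc j * x j) + (v - vc))
            (β * Real.sqrt (x ⬝ᵥ (Λ⁻¹ *ᵥ x)) -
              Real.sqrt (∑ p : Fin d × Fin d, Ac p * (x p.1 * x p.2)))
          have ha2 := abs_add_le (w ⬝ᵥ x - ∑ j, wc j * x j) (v - vc)
          linarith
  · have hfr1 : Module.finrank ℝ (EuclideanSpace ℝ (Fin d)) = d := finrank_euclideanSpace_fin
    have hfr2 : Module.finrank ℝ ℝ = 1 := Module.finrank_self ℝ
    have hfr3 : Module.finrank ℝ (EuclideanSpace ℝ (Fin d × Fin d)) = d ^ 2 := by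
      rw [finrank_euclideanSpace]
      simp [pow_two]
    rw [hfr1] at hPwcard
    rw [hfr2, pow_one] at hPvcard
    rw [hfr3] at hPAcard
    have ha1 : (1 : ℝ) + 2 * L / (ε / 4) = 1 + 8 * L / ε := by
      field_simp
      ring
    have ha2 : (1 : ℝ) + 2 * D / (ε / 4) = 1 + 8 * D / ε := by
      field_simp
      ring
    have ha3 : (1 : ℝ) + 2 * (Real.sqrt d * B ^ 2 / lam) / (ε ^ 2 / 4)
        = 1 + 8 * Real.sqrt d * B ^ 2 / (lam * ε ^ 2) := by
      field_simp
      ring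
    rw [ha1] at hPwcard
    rw [ha2] at hPvcard
    rw [ha3] at hPAcard
    have hcard : ((Pw ×ˢ Pv ×ˢ PA).image g).card ≤ Pw.card * (Pv.card * PA.card) := by
      refine le_trans Finset.card_image_le ?_
      rw [Finset.card_product, Finset.card_product]
    have hCne : ((Pw ×ˢ Pv ×ˢ PA).image g).Nonempty :=
      (hPwne.product (hPvne.product hPAne)).image g
    have hCpos : 0 < (((Pw ×ˢ Pv ×ˢ PA).image g).card : ℝ) := by
      exact_mod_cast Finset.card_pos.2 hCne
    have hb1 : Real.log (Pw.card : ℝ) ≤ d * Real.log (1 + 8 * L / ε) := by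
      rw [← Real.log_pow]
      exact Real.log_le_log (by exact_mod_cast hPwne.card_pos) hPwcard
    have hb2 : Real.log (Pv.card : ℝ) ≤ Real.log (1 + 8 * D / ε) :=
      Real.log_le_log (by exact_mod_cast hPvne.card_pos) hPvcard
    have hb3 : Real.log (PA.card : ℝ) ≤ (d : ℝ) ^ 2 * Real.log (1 + 8 * Real.sqrt d * B ^ 2 /
        (lam * ε ^ 2)) := by
      have h := Real.log_le_log (by exact_mod_cast hPAne.card_pos : (0:ℝ) < (PA.card : ℝ)) hPAcard
      rwa [Real.log_pow, Nat.cast_pow] at h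
    calc Real.log (((Pw ×ˢ Pv ×ˢ PA).image g).card : ℝ)
        ≤ Real.log ((Pw.card : ℝ) * ((Pv.card : ℝ) * (PA.card : ℝ))) := by
          apply Real.log_le_log hCpos
          exact_mod_cast hcard
      _ = Real.log (Pw.card : ℝ) + (Real.log (Pv.card : ℝ) + Real.log (PA.card : ℝ)) := by
          rw [Real.log_mul (by exact_mod_cast hPwne.card_pos.ne')
              (by exact_mod_cast (Nat.mul_pos hPvne.card_pos hPAne.card_pos).ne'),
            Real.log_mul (by exact_mod_cast hPvne.card_pos.ne')
              (by exact_mod_cast hPAne.card_pos.ne')]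
      _ ≤ d * Real.log (1 + 8 * L / ε) + (Real.log (1 + 8 * D / ε) +
          d ^ 2 * Real.log (1 + 8 * Real.sqrt d * B ^ 2 / (lam * ε ^ 2))) := by
          linarith
      _ = d * Real.log (1 + 8 * L / ε) + Real.log (1 + 8 * D / ε) +
          d ^ 2 * Real.log (1 + 8 * Real.sqrt d * B ^ 2 / (lam * ε ^ 2)) := by ring
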